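/- Let 𝒢 be a minimum-cardinality family of flats witnessing that a point set has essential dimension at most k while covering a maximum number of points. Then for any subfamily 𝒜 ⊆ 𝒢 with |𝒜| ≥ 2 and any flat Λ, the sum over Γ ∈ 𝒜 of dim(Γ ∩ Λ) is strictly less than dim(Λ). -/
import Mathlib


open scoped Classical

noncomputable def adim {K V : Type*} [Field K] [AddCommGroup V] [Module K V]
    (s : AffineSubspace K V) : ℤ :=
  if s = ⊥ then -1 else (Module.finrank K s.direction : ℤ)

/-- `Q` spans the flat `Γ` of dimension `k`: `Γ` is the affine span of `Q ∩ Γ`. -/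
def Spans {K V : Type*} [Field K] [AddCommGroup V] [Module K V]
    (Q : Set V) (k : ℤ) (Γ : AffineSubspace K V) : Prop :=
  adim Γ = k ∧ affineSpan K (Q ∩ ↑Γ) = Γ

/-- the number of `k`-flats spanned by `Q` (for `k = -1` this counts the empty flat). -/
noncomputable def nFlats (K : Type*) {V : Type*} [Field K] [AddCommGroup V] [Module K V]
    (Q : Set V) (k : ℤ) : ℕ :=
  Nat.card {Γ : AffineSubspace K V // Spans Q k Γ}

/-- the essential dimension of `Q` is at most `t`. -/
def EssDimLE (K : Type*) {V : Type*} [Field K] [AddCommGroup V] [Module K V]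
    (Q : Set V) (t : ℤ) : Prop :=
  ∃ G : Finset (AffineSubspace K V), (∀ Γ ∈ G, 1 ≤ adim Γ) ∧
    (∀ q ∈ Q, ∃ Γ ∈ G, q ∈ Γ) ∧ ∑ Γ ∈ G, adim Γ ≤ t

/-- `g_m(P)`: the maximum size of a subset of `P` of essential dimension at most `m`. -/
noncomputable def gdim (K : Type*) {V : Type*} [Field K] [AddCommGroup V] [Module K V]
    (P : Finset V) (m : ℤ) : ℕ :=
  sSup {c : ℕ | ∃ P' ⊆ P, EssDimLE K (P' : Set V) m ∧ P'.card = c}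

section AuxLemmas

set_option linter.unusedSectionVars false

variable {K V : Type*} [Field K] [AddCommGroup V] [Module K V] [FiniteDimensional K V]

lemma adim_bot : adim (⊥ : AffineSubspace K V) = -1 := if_pos rfl

lemma neg_one_le_adim (s : AffineSubspace K V) : -1 ≤ adim s := by
  unfold adim; split_ifs
  · exact le_refl _
  · exact le_trans (by norm_num) (Int.natCast_nonneg _)

lemma adim_mono {A B : AffineSubspace K V} (h : A ≤ B) : adim A ≤ adim B := by
  by_cases hA : A = ⊥
  · rw [hA, adim_bot]; exact neg_one_le_adim B
  · have hB : B ≠ ⊥ := fun hb => hA (le_bot_iff.mp (hb ▸ h))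
    simp only [adim, if_neg hA, if_neg hB]
    exact_mod_cast Submodule.finrank_mono (AffineSubspace.direction_le h)

lemma adim_sup_le (A B : AffineSubspace K V) :
    adim (A ⊔ B) ≤ adim A + adim B - adim (A ⊓ B) := by
  by_cases hA : A = ⊥
  · rw [hA, bot_sup_eq, bot_inf_eq, adim_bot]; linarith
  by_cases hB : B = ⊥
  · rw [hB, sup_bot_eq, inf_bot_eq, adim_bot]; linarith
  obtain ⟨p1, hp1⟩ := (AffineSubspace.nonempty_iff_ne_bot A).2 hA
  obtain ⟨p2, hp2⟩ := (AffineSubspace.nonempty_iff_ne_bot B).2 hB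
  have hAB : A ⊔ B ≠ ⊥ := fun h => hA (le_bot_iff.mp (h ▸ le_sup_left))
  by_cases hI : A ⊓ B = ⊥
  · have hd := AffineSubspace.direction_sup hp1 hp2
    have h1 : Module.finrank K (A ⊔ B).direction ≤
        Module.finrank K A.direction + Module.finrank K B.direction + 1 := by
      rw [hd]
      have e1 := Submodule.finrank_sup_add_finrank_inf_eq
        (A.direction ⊔ B.direction) (K ∙ (p2 -ᵥ p1))
      have e2 := Submodule.finrank_sup_add_finrank_inf_eq A.direction B.direction
      have h3 : Module.finrank K (K ∙ (p2 -ᵥ p1)) ≤ 1 := by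
        rcases eq_or_ne (p2 -ᵥ p1) 0 with h | h
        · rw [h, Submodule.span_zero_singleton, finrank_bot]; norm_num
        · rw [finrank_span_singleton h]
      omega
    simp only [adim, if_neg hA, if_neg hB, if_neg hAB, if_pos hI]
    push_cast
    omega
  · obtain ⟨p, hp⟩ := (AffineSubspace.nonempty_iff_ne_bot (A ⊓ B)).2 hI
    have hd := AffineSubspace.direction_sup hp.1 hp.2
    rw [vsub_self, Submodule.span_zero_singleton, sup_bot_eq] at hd
    have e2 := Submodule.finrank_sup_add_finrank_inf_eq A.direction B.direction
    have h4 : Module.finrank K (A ⊓ B).direction ≤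
        Module.finrank K ↥(A.direction ⊓ B.direction) :=
      Submodule.finrank_mono (AffineSubspace.direction_inf A B)
    simp only [adim, if_neg hA, if_neg hB, if_neg hAB, if_neg hI]
    rw [hd]
    push_cast
    omega

lemma adim_sup_finset (Λ : AffineSubspace K V) (𝒜 : Finset (AffineSubspace K V)) :
    adim (Λ ⊔ 𝒜.sup id) ≤ adim Λ + ∑ Γ ∈ 𝒜, (adim Γ - adim (Γ ⊓ Λ)) := by
  induction 𝒜 using Finset.induction with
  | empty => simp
  | @insert Γ 𝒜 hΓ ih =>
    rw [Finset.sup_insert, Finset.sum_insert hΓ]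
    have h1 : Λ ⊔ (id Γ ⊔ 𝒜.sup id) = (Λ ⊔ 𝒜.sup id) ⊔ Γ := by
      simp only [id_eq]; rw [sup_comm Γ, ← sup_assoc]
    have h2 : Γ ⊓ Λ ≤ (Λ ⊔ 𝒜.sup id) ⊓ Γ :=
      le_inf (inf_le_right.trans le_sup_left) inf_le_left
    have h3 := adim_mono h2
    have h4 := adim_sup_le (Λ ⊔ 𝒜.sup id) Γ
    rw [h1]
    linarith

end AuxLemmas

/-- If `G = 𝒢_k(P)` is a minimum-cardinality family of flats of dimension ≥ 1 of total
dimension at most `k` covering a maximum-cardinality subset of `P` of essential dimension at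
most `k`, then for any subfamily `𝒜 ⊆ G` with `|𝒜| ≥ 2` and any flat `Λ`,
`∑_{Γ ∈ 𝒜} dim (Γ ∩ Λ) < dim Λ`. -/
theorem stmt_8 {K V : Type*} [Field K] [AddCommGroup V] [Module K V] [FiniteDimensional K V]
    (P : Finset V) (k : ℤ)
    (G : Finset (AffineSubspace K V))
    (hG1 : ∀ Γ ∈ G, 1 ≤ adim Γ)
    (hGsum : ∑ Γ ∈ G, adim Γ ≤ k)
    (hGcov : (P.filter (fun p => ∃ Γ ∈ G, p ∈ Γ)).card = gdim K P k)
    (hGmin : ∀ G' : Finset (AffineSubspace K V), (∀ Γ ∈ G', 1 ≤ adim Γ) →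
      ∑ Γ ∈ G', adim Γ ≤ k → (P.filter (fun p => ∃ Γ ∈ G', p ∈ Γ)).card = gdim K P k →
      G.card ≤ G'.card)
    (𝒜 : Finset (AffineSubspace K V)) (h𝒜 : 𝒜 ⊆ G) (h𝒜2 : 2 ≤ 𝒜.card)
    (Λ : AffineSubspace K V) :
    ∑ Γ ∈ 𝒜, adim (Γ ⊓ Λ) < adim Λ := by
  by_contra hcon
  push_neg at hcon
  obtain ⟨Γ₀, hΓ₀⟩ : 𝒜.Nonempty := Finset.card_pos.mp (by omega)
  set Λ' : AffineSubspace K V := Λ ⊔ 𝒜.sup id with hΛ'def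
  set G' : Finset (AffineSubspace K V) := insert Λ' (G \ 𝒜) with hG'def
  have hΓ₀Λ' : Γ₀ ≤ Λ' := le_sup_of_le_right (Finset.le_sup (f := id) hΓ₀)
  have hΛ'1 : 1 ≤ adim Λ' := le_trans (hG1 Γ₀ (h𝒜 hΓ₀)) (adim_mono hΓ₀Λ')
  have h1' : ∀ Γ ∈ G', 1 ≤ adim Γ := by
    intro Γ hΓ
    rcases Finset.mem_insert.mp hΓ with h | h
    · exact h ▸ hΛ'1
    · exact hG1 Γ (Finset.mem_sdiff.mp h).1
  -- sum bound
  have hΛ'dim : adim Λ' ≤ ∑ Γ ∈ 𝒜, adim Γ := by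
    have := adim_sup_finset Λ 𝒜
    rw [Finset.sum_sub_distrib] at this
    linarith
  have hsum' : ∑ Γ ∈ G', adim Γ ≤ k := by
    have hsplit : ∑ Γ ∈ G \ 𝒜, adim Γ + ∑ Γ ∈ 𝒜, adim Γ = ∑ Γ ∈ G, adim Γ :=
      Finset.sum_sdiff h𝒜
    have hle : ∑ Γ ∈ G', adim Γ ≤ adim Λ' + ∑ Γ ∈ G \ 𝒜, adim Γ := by
      by_cases hmem : Λ' ∈ G \ 𝒜
      · rw [hG'def, Finset.insert_eq_self.mpr hmem]
        linarith
      · rw [hG'def, Finset.sum_insert hmem]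
    linarith
  -- coverage
  have hsubset : P.filter (fun p => ∃ Γ ∈ G, p ∈ Γ) ⊆
      P.filter (fun p => ∃ Γ ∈ G', p ∈ Γ) := by
    intro p hp
    rw [Finset.mem_filter] at hp ⊢
    obtain ⟨hpP, Γ, hΓG, hpΓ⟩ := hp
    refine ⟨hpP, ?_⟩
    by_cases h : Γ ∈ 𝒜
    · exact ⟨Λ', Finset.mem_insert_self _ _,
        le_sup_of_le_right (Finset.le_sup (f := id) h) hpΓ⟩
    · exact ⟨Γ, Finset.mem_insert_of_mem (Finset.mem_sdiff.mpr ⟨hΓG, h⟩), hpΓ⟩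
  have hbdd : BddAbove {c : ℕ | ∃ P' ⊆ P, EssDimLE K (P' : Set V) k ∧ P'.card = c} := by
    refine ⟨P.card, fun c hc => ?_⟩
    obtain ⟨P', hP', _, hc⟩ := hc
    exact hc ▸ Finset.card_le_card hP'
  have hcov' : (P.filter (fun p => ∃ Γ ∈ G', p ∈ Γ)).card = gdim K P k := by
    refine le_antisymm ?_ ?_
    · refine le_csSup hbdd ?_
      refine ⟨P.filter (fun p => ∃ Γ ∈ G', p ∈ Γ), Finset.filter_subset _ _, ?_, rfl⟩
      refine ⟨G', h1', ?_, hsum'⟩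
      intro q hq
      rw [Finset.mem_coe, Finset.mem_filter] at hq
      exact hq.2
    · rw [← hGcov]
      exact Finset.card_le_card hsubset
  have hmin := hGmin G' h1' hsum' hcov'
  have hcard : G'.card ≤ (G \ 𝒜).card + 1 := Finset.card_insert_le _ _
  have hsd : (G \ 𝒜).card = G.card - 𝒜.card := Finset.card_sdiff_of_subset h𝒜
  have h𝒜G : 𝒜.card ≤ G.card := Finset.card_le_card h𝒜
  omega
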